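/- For every real number λ with 0 < λ < π there exists a real number g₀ such that the following holds: for every real g ≥ g₀ and every real σ with 0 < σ ≤ 4/3, if for all real α, β > 0 with 4α + β < 1/2 one has (log(2α²σ))² / σ ≥ 4πβ²(g − 1), then σ ≤ (log g)² / (λ · g). -/

import Mathlib

open Real

set_option maxHeartbeats 1600000 in
theorem asymptotic_systolic_ratio_bound (lam : ℝ) (hlam : 0 < lam) (hlt : lam < π) :
    ∃ g₀ : ℝ, ∀ g : ℝ, g₀ ≤ g → ∀ σ : ℝ, 0 < σ → σ ≤ 4 / 3 →
      (∀ α β : ℝ, 0 < α → 0 < β → 4 * α + β < 1 / 2 →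
        4 * π * β ^ 2 * (g - 1) ≤ (Real.log (2 * α ^ 2 * σ)) ^ 2 / σ) →
      σ ≤ (Real.log g) ^ 2 / (lam * g) := by
  have hπ : (0:ℝ) < π := pi_pos
  set μ : ℝ := (lam + π) / 2 with hμdef
  have hμlt : lam < μ := by simp only [hμdef]; linarith
  have hμpos : 0 < μ := lt_trans hlam hμlt
  set β : ℝ := Real.sqrt ((lam + π) / (8 * π)) with hβdef
  have hx : (0:ℝ) < (lam + π) / (8 * π) := by positivity
  have hβpos : 0 < β := Real.sqrt_pos.mpr hx
  have hβsq : β ^ 2 = (lam + π) / (8 * π) := Real.sq_sqrt hx.le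
  have hβhalf : β < 1 / 2 := by
    have h2 : (lam + π) / (8 * π) < 1/4 := by
      rw [div_lt_div_iff₀ (by positivity) (by norm_num)]
      linarith
    have h3 : β < Real.sqrt (1/4) := by
      rw [hβdef]
      exact Real.sqrt_lt_sqrt hx.le h2
    rwa [show (1:ℝ)/4 = (1/2)^2 by norm_num, Real.sqrt_sq (by norm_num)] at h3
  set α : ℝ := (1/2 - β) / 8 with hαdef
  have hαpos : 0 < α := by simp only [hαdef]; linarith
  have hαβ : 4 * α + β < 1/2 := by simp only [hαdef]; linarith
  have hαsm : α ≤ 1/16 := by simp only [hαdef]; linarith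
  set C : ℝ := max (Real.log (lam / (2 * α ^ 2))) 0 with hCdef
  have hC0 : 0 ≤ C := le_max_right _ _
  have hC1 : Real.log (lam / (2 * α ^ 2)) ≤ C := le_max_left _ _
  set ν : ℝ := (lam + μ) / 2 with hνdef
  have hνlt : lam < ν := by simp only [hνdef]; linarith
  have hνμ : ν < μ := by simp only [hνdef]; linarith
  clear_value μ β α C ν
  refine ⟨max (max 3 (2 * μ / (μ - lam)))
      (Real.exp (max 1 (lam * (2*C + C^2) / (ν - lam)))), ?_⟩
  intro g hg σ hσ hσ43 hyp
  have hg3 : (3:ℝ) ≤ g := le_trans (le_trans (le_max_left _ _) (le_max_left _ _)) hg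
  have hgμ : 2 * μ / (μ - lam) ≤ g :=
    le_trans (le_trans (le_max_right _ _) (le_max_left _ _)) hg
  have hgexp : Real.exp (max 1 (lam * (2*C + C^2) / (ν - lam))) ≤ g :=
    le_trans (le_max_right _ _) hg
  have hgpos : 0 < g := by linarith
  have hlogb : max 1 (lam * (2*C + C^2) / (ν - lam)) ≤ Real.log g := by
    have := Real.log_le_log (Real.exp_pos _) hgexp
    rwa [Real.log_exp] at this
  have hL1 : 1 ≤ Real.log g := le_trans (le_max_left _ _) hlogb
  have hL2 : lam * (2*C + C^2) / (ν - lam) ≤ Real.log g :=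
    le_trans (le_max_right _ _) hlogb
  have hlamg : 0 < lam * g := by positivity
  by_cases hcase : σ ≤ (Real.log g)^2 / (lam * g)
  · exact hcase
  push_neg at hcase
  have hbig : (Real.log g)^2 < lam * g * σ := by
    rw [div_lt_iff₀ hlamg] at hcase
    linarith [hcase]
  have h11 : 1 ≤ (Real.log g)^2 := by
    have := mul_le_mul hL1 hL1 zero_le_one (by linarith : (0:ℝ) ≤ Real.log g)
    rw [pow_two]; linarith
  have hbig1 : 1 ≤ lam * g * σ := by linarith
  -- apply hypothesis
  have h1 := hyp α β hαpos hβpos hαβ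
  have hβμ : 4 * π * β ^ 2 = μ := by
    rw [hβsq]; field_simp [hμdef]; rw [hμdef]; ring
  rw [hβμ] at h1
  have h2 : μ * (g - 1) * σ ≤ (Real.log (2 * α ^ 2 * σ)) ^ 2 := by
    rw [le_div_iff₀ hσ] at h1; linarith
  -- bound the log term
  have hargpos : 0 < 2 * α ^ 2 * σ := by positivity
  have hα2 : α ^ 2 ≤ (1/16:ℝ) ^ 2 := pow_le_pow_left₀ hαpos.le hαsm 2
  have harglt : 2 * α ^ 2 * σ < 1 := by
    have t1 : 2 * α ^ 2 * σ ≤ 2 * α ^ 2 * (4/3) :=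
      mul_le_mul_of_nonneg_left hσ43 (by positivity)
    have t2 : (2:ℝ) * α ^ 2 * (4/3) ≤ 2 * (1/16:ℝ)^2 * (4/3) := by linarith
    norm_num at t2
    linarith
  have htneg : Real.log (2 * α ^ 2 * σ) < 0 := Real.log_neg hargpos harglt
  have hkey : σ⁻¹ ≤ lam * g := by
    rw [← one_div, div_le_iff₀ hσ]
    linarith
  have hinv : (2 * α ^ 2 * σ)⁻¹ ≤ lam * g / (2 * α ^ 2) := by
    rw [mul_inv]
    calc (2 * α ^ 2)⁻¹ * σ⁻¹ ≤ (2 * α ^ 2)⁻¹ * (lam * g) :=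
          mul_le_mul_of_nonneg_left hkey (by positivity)
      _ = lam * g / (2 * α ^ 2) := by rw [div_eq_mul_inv]; ring
  have hnegt : -Real.log (2 * α ^ 2 * σ) ≤ Real.log g + C := by
    have e1 : -Real.log (2 * α ^ 2 * σ) = Real.log ((2 * α ^ 2 * σ)⁻¹) :=
      (Real.log_inv _).symm
    rw [e1]
    have e2 : Real.log ((2 * α ^ 2 * σ)⁻¹) ≤ Real.log (lam * g / (2 * α ^ 2)) :=
      Real.log_le_log (by positivity) hinv
    have e3 : lam * g / (2 * α ^ 2) = g * (lam / (2 * α ^ 2)) := by ring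
    rw [e3, Real.log_mul (ne_of_gt hgpos) (by positivity)] at e2
    linarith [e2, hC1]
  have hsq : (Real.log (2 * α ^ 2 * σ)) ^ 2 ≤ (Real.log g + C) ^ 2 :=
    sq_le_sq' (by linarith) (by linarith)
  have h3 : μ * (g - 1) * σ ≤ (Real.log g + C) ^ 2 := le_trans h2 hsq
  -- the two "eventual" inequalities coming from the choice of g₀
  have hA : ν * g ≤ μ * (g - 1) := by
    rw [div_le_iff₀ (by linarith : (0:ℝ) < μ - lam)] at hgμ
    simp only [hνdef]; linarith
  have hB : lam * (Real.log g + C) ^ 2 ≤ ν * (Real.log g) ^ 2 := by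
    rw [div_le_iff₀ (by linarith : (0:ℝ) < ν - lam)] at hL2
    have f1 : Real.log g * (lam * (2*C + C^2)) ≤ Real.log g * (Real.log g * (ν - lam)) :=
      mul_le_mul_of_nonneg_left hL2 (by linarith : (0:ℝ) ≤ Real.log g)
    have f2 : 0 ≤ lam * (C * C * (Real.log g - 1)) :=
      mul_nonneg hlam.le (mul_nonneg (mul_nonneg hC0 hC0) (by linarith))
    linarith [f1, f2]
  -- combine everything
  have hμg1 : 0 < μ * (g - 1) := mul_pos hμpos (by linarith)
  have hchain : lam * g * (μ * (g - 1) * σ) ≤ μ * (g - 1) * (Real.log g) ^ 2 := by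
    have s1 : lam * g * (μ * (g - 1) * σ) ≤ lam * g * (Real.log g + C) ^ 2 :=
      mul_le_mul_of_nonneg_left h3 (le_of_lt hlamg)
    have s2 : lam * g * (Real.log g + C) ^ 2 ≤ ν * g * (Real.log g) ^ 2 := by
      have := mul_le_mul_of_nonneg_left hB hgpos.le
      linarith [this]
    have s3 : ν * g * (Real.log g) ^ 2 ≤ μ * (g - 1) * (Real.log g) ^ 2 :=
      mul_le_mul_of_nonneg_right hA (sq_nonneg _)
    linarith
  have hfin : lam * g * σ ≤ (Real.log g) ^ 2 := by
    have h4 : μ * (g - 1) * (lam * g * σ) ≤ μ * (g - 1) * (Real.log g) ^ 2 := by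
      have e : lam * g * (μ * (g - 1) * σ) = μ * (g - 1) * (lam * g * σ) := by ring
      linarith [hchain, e ▸ hchain]
    exact le_of_mul_le_mul_left h4 hμg1
  rw [le_div_iff₀ hlamg]
  linarith
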